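/- Let 0<β<1 and ρ>0 with ρ≠1, and for y>0 define φ_y(c) = H(c, (1−c)y) = ((1−β)c^{1−ρ} + β((1−c)y)^{1−ρ})^{1/(1−ρ)} for c∈(0,1). Then φ_y attains a unique maximum on (0,1) at c* = (1 + y^{(1−ρ)/ρ}(β/(1−β))^{1/ρ})^{−1}, with φ_y'(c) > 0 for c < c* and φ_y'(c) < 0 for c > c*. -/

import Mathlib

open Set

/-- `φ_y(c) = H(c, (1-c)y)` for the CES aggregator `H`. -/
noncomputable def phi14 (β ρ y c : ℝ) : ℝ :=
  ((1 - β) * c ^ (1 - ρ) + β * ((1 - c) * y) ^ (1 - ρ)) ^ (1 / (1 - ρ))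

/-- The optimal consumption fraction `c* = (1 + y^((1-ρ)/ρ) (β/(1-β))^(1/ρ))⁻¹`. -/
noncomputable def cstar14 (β ρ y : ℝ) : ℝ :=
  (1 + y ^ ((1 - ρ) / ρ) * (β / (1 - β)) ^ (1 / ρ))⁻¹

lemma sign14 {β ρ y : ℝ} (hβ0 : 0 < β) (hβ1 : β < 1) (hρ0 : 0 < ρ)
    (hy : 0 < y) {c : ℝ} (hc : c ∈ Ioo (0 : ℝ) 1) :
    (0 < (1 - β) * c ^ (-ρ) - β * y * ((1 - c) * y) ^ (-ρ) ↔ c < cstar14 β ρ y) ∧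
    ((1 - β) * c ^ (-ρ) - β * y * ((1 - c) * y) ^ (-ρ) < 0 ↔ cstar14 β ρ y < c) := by
  obtain ⟨hc0, hc1⟩ := hc
  have h1c : (0:ℝ) < 1 - c := by linarith
  have h1β : (0:ℝ) < 1 - β := by linarith
  set A := y ^ ((1 - ρ) / ρ) * (β / (1 - β)) ^ (1 / ρ) with hAdef
  have hA : 0 < A := by positivity
  have hcst : cstar14 β ρ y = (1 + A)⁻¹ := rfl
  have e1 : β * y * ((1 - c) * y) ^ (-ρ) = β * y ^ (1 - ρ) * (1 - c) ^ (-ρ) := by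
    rw [Real.mul_rpow h1c.le hy.le, show (1:ℝ) - ρ = 1 + (-ρ) from by ring,
      Real.rpow_add hy, Real.rpow_one]
    ring
  have hP : 0 < c ^ ρ := Real.rpow_pos_of_pos hc0 _
  have hQ : 0 < (1 - c) ^ ρ := Real.rpow_pos_of_pos h1c _
  have hY : 0 < y ^ (1 - ρ) := Real.rpow_pos_of_pos hy _
  have ePinv : c ^ (-ρ) = (c ^ ρ)⁻¹ := by rw [Real.rpow_neg hc0.le]
  have eQinv : (1 - c) ^ (-ρ) = ((1 - c) ^ ρ)⁻¹ := by rw [Real.rpow_neg h1c.le]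
  have hAρ : A ^ ρ = β * y ^ (1 - ρ) / (1 - β) := by
    rw [hAdef, Real.mul_rpow (by positivity) (by positivity),
      ← Real.rpow_mul hy.le, ← Real.rpow_mul (by positivity),
      div_mul_cancel₀ _ hρ0.ne', one_div, inv_mul_cancel₀ hρ0.ne', Real.rpow_one]
    ring
  have hQP : ((1 - c) / c) ^ ρ = (1 - c) ^ ρ / c ^ ρ := Real.div_rpow h1c.le hc0.le ρ
  have s1 : β * y ^ (1 - ρ) / (1 - β) < ((1 - c) / c) ^ ρ ↔
      β * y ^ (1 - ρ) * c ^ ρ < (1 - β) * (1 - c) ^ ρ := by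
    rw [hQP, div_lt_div_iff₀ h1β hP, mul_comm ((1 - c) ^ ρ) (1 - β)]
  have s1' : ((1 - c) / c) ^ ρ < β * y ^ (1 - ρ) / (1 - β) ↔
      (1 - β) * (1 - c) ^ ρ < β * y ^ (1 - ρ) * c ^ ρ := by
    rw [hQP, div_lt_div_iff₀ hP h1β, mul_comm ((1 - c) ^ ρ) (1 - β)]
  have s2 : A ^ ρ < ((1 - c) / c) ^ ρ ↔ A < (1 - c) / c :=
    Real.rpow_lt_rpow_iff hA.le (by positivity) hρ0
  have s2' : ((1 - c) / c) ^ ρ < A ^ ρ ↔ (1 - c) / c < A :=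
    Real.rpow_lt_rpow_iff (by positivity) hA.le hρ0
  have s3 : A < (1 - c) / c ↔ c < (1 + A)⁻¹ := by
    rw [lt_div_iff₀ hc0, inv_eq_one_div, lt_div_iff₀ (by positivity : (0:ℝ) < 1 + A)]
    constructor <;> intro h <;> nlinarith
  have s3' : (1 - c) / c < A ↔ (1 + A)⁻¹ < c := by
    rw [div_lt_iff₀ hc0, inv_eq_one_div, div_lt_iff₀ (by positivity : (0:ℝ) < 1 + A)]
    constructor <;> intro h <;> nlinarith
  constructor
  · rw [e1, ePinv, eQinv, sub_pos, ← div_eq_mul_inv, ← div_eq_mul_inv,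
      div_lt_div_iff₀ hQ hP, ← s1, ← hAρ, s2, s3, hcst]
  · rw [e1, ePinv, eQinv, sub_neg, ← div_eq_mul_inv, ← div_eq_mul_inv,
      div_lt_div_iff₀ hP hQ, ← s1', ← hAρ, s2', s3', hcst]

lemma hasDeriv14 {β ρ y : ℝ} (hβ0 : 0 < β) (hβ1 : β < 1) (hρ1 : ρ ≠ 1)
    (hy : 0 < y) {c : ℝ} (hc : c ∈ Ioo (0 : ℝ) 1) :
    HasDerivAt (phi14 β ρ y)
      (((1 - β) * c ^ (1 - ρ) + β * ((1 - c) * y) ^ (1 - ρ)) ^ (1 / (1 - ρ) - 1) *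
        ((1 - β) * c ^ (-ρ) - β * y * ((1 - c) * y) ^ (-ρ))) c := by
  obtain ⟨hc0, hc1⟩ := hc
  have h1c : (0:ℝ) < 1 - c := by linarith
  have h1β : (0:ℝ) < 1 - β := by linarith
  have hcy : (0:ℝ) < (1 - c) * y := by positivity
  have hp : (1:ℝ) - ρ ≠ 0 := sub_ne_zero.mpr (Ne.symm hρ1)
  have hu : 0 < (1 - β) * c ^ (1 - ρ) + β * ((1 - c) * y) ^ (1 - ρ) := by positivity
  have d1 : HasDerivAt (fun x : ℝ => x ^ (1 - ρ)) ((1 - ρ) * c ^ (1 - ρ - 1)) c :=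
    Real.hasDerivAt_rpow_const (Or.inl hc0.ne')
  have dlin : HasDerivAt (fun x : ℝ => (1 - x) * y) ((0 - 1) * y) c :=
    ((hasDerivAt_const c (1:ℝ)).sub (hasDerivAt_id c)).mul_const y
  have d2 := dlin.rpow_const (p := 1 - ρ) (Or.inl hcy.ne')
  have dU := (d1.const_mul (1 - β)).add (d2.const_mul β)
  have dφ := dU.rpow_const (p := 1 / (1 - ρ)) (Or.inl hu.ne')
  have hphi : phi14 β ρ y = fun x : ℝ =>
      ((1 - β) * x ^ (1 - ρ) + β * ((1 - x) * y) ^ (1 - ρ)) ^ (1 / (1 - ρ)) := rfl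
  rw [hphi]
  convert dφ using 1
  · rfl
  rw [show (1:ℝ) - ρ - 1 = -ρ from by ring]
  simp only [Pi.add_apply]
  field_simp
  ring

/-- For `y > 0`, the map `c ↦ H(c,(1-c)y)` attains a unique maximum on `(0,1)` at
`c* = (1 + y^((1-ρ)/ρ)(β/(1-β))^(1/ρ))⁻¹`, with positive derivative before `c*` and
negative derivative after `c*`. -/
theorem stmt14 (β ρ y : ℝ) (hβ0 : 0 < β) (hβ1 : β < 1) (hρ0 : 0 < ρ) (hρ1 : ρ ≠ 1)
    (hy : 0 < y) :
    cstar14 β ρ y ∈ Ioo (0 : ℝ) 1 ∧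
    (∀ c ∈ Ioo (0 : ℝ) 1, c ≠ cstar14 β ρ y → phi14 β ρ y c < phi14 β ρ y (cstar14 β ρ y)) ∧
    (∀ c ∈ Ioo (0 : ℝ) 1, c < cstar14 β ρ y → 0 < deriv (phi14 β ρ y) c) ∧
    (∀ c ∈ Ioo (0 : ℝ) 1, cstar14 β ρ y < c → deriv (phi14 β ρ y) c < 0) := by
  have h1β : (0:ℝ) < 1 - β := by linarith
  have hA : 0 < y ^ ((1 - ρ) / ρ) * (β / (1 - β)) ^ (1 / ρ) := by positivity
  have hmem : cstar14 β ρ y ∈ Ioo (0 : ℝ) 1 := by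
    constructor
    · rw [cstar14]; positivity
    · rw [cstar14]; exact inv_lt_one_of_one_lt₀ (by linarith)
  obtain ⟨hs0, hs1⟩ := hmem
  have hpos : ∀ c ∈ Ioo (0 : ℝ) 1, c < cstar14 β ρ y → 0 < deriv (phi14 β ρ y) c := by
    intro c hc hlt
    rw [(hasDeriv14 hβ0 hβ1 hρ1 hy hc).deriv]
    have hu : 0 < (1 - β) * c ^ (1 - ρ) + β * ((1 - c) * y) ^ (1 - ρ) := by
      obtain ⟨hc0, hc1⟩ := hc
      have h1c : (0:ℝ) < 1 - c := by linarith
      positivity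
    exact mul_pos (Real.rpow_pos_of_pos hu _) ((sign14 hβ0 hβ1 hρ0 hy hc).1.mpr hlt)
  have hneg : ∀ c ∈ Ioo (0 : ℝ) 1, cstar14 β ρ y < c → deriv (phi14 β ρ y) c < 0 := by
    intro c hc hlt
    rw [(hasDeriv14 hβ0 hβ1 hρ1 hy hc).deriv]
    have hu : 0 < (1 - β) * c ^ (1 - ρ) + β * ((1 - c) * y) ^ (1 - ρ) := by
      obtain ⟨hc0, hc1⟩ := hc
      have h1c : (0:ℝ) < 1 - c := by linarith
      positivity
    exact mul_neg_of_pos_of_neg (Real.rpow_pos_of_pos hu _)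
      ((sign14 hβ0 hβ1 hρ0 hy hc).2.mpr hlt)
  refine ⟨⟨hs0, hs1⟩, ?_, hpos, hneg⟩
  have mono : StrictMonoOn (phi14 β ρ y) (Ioc 0 (cstar14 β ρ y)) := by
    apply strictMonoOn_of_deriv_pos (convex_Ioc _ _)
    · intro x hx
      exact (hasDeriv14 hβ0 hβ1 hρ1 hy ⟨hx.1, lt_of_le_of_lt hx.2 hs1⟩).continuousAt.continuousWithinAt
    · intro x hx
      rw [interior_Ioc] at hx
      exact hpos x ⟨hx.1, hx.2.trans hs1⟩ hx.2
  have anti : StrictAntiOn (phi14 β ρ y) (Ico (cstar14 β ρ y) 1) := by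
    apply strictAntiOn_of_deriv_neg (convex_Ico _ _)
    · intro x hx
      exact (hasDeriv14 hβ0 hβ1 hρ1 hy ⟨lt_of_lt_of_le hs0 hx.1, hx.2⟩).continuousAt.continuousWithinAt
    · intro x hx
      rw [interior_Ico] at hx
      exact hneg x ⟨hs0.trans hx.1, hx.2⟩ hx.1
  intro c hc hne
  rcases lt_or_gt_of_ne hne with h | h
  · exact mono ⟨hc.1, h.le⟩ ⟨hs0, le_refl _⟩ h
  · exact anti ⟨le_refl _, hs1⟩ ⟨h.le, hc.2⟩ h
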